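/- Let C be a complete and cocomplete category equipped with a factorization system (E,M), let A be an alphabet, and let L : O_A → C be a C-language. Then the category Auto(L) has an initial object (given by the left Kan extension of L along ι) and a final object (given by the right Kan extension of L along ι), and the componentwise (E,M)-factorization of the unique morphism from the initial to the final object of Auto(L) yields an automaton Min(L) accepting L which (E_Aut, M_Aut)-divides every automaton accepting L: for every 𝒜 in Auto(L) there exist 𝒵 in Auto(L), a morphism 𝒵 → 𝒜 in Auto(L) all of whose components lie in M, and a morphism 𝒵 → Min(L) all of whose components lie in E. -/

import Mathlib

open CategoryTheory CategoryTheory.Limits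

universe v u

/-! ### The input category `I_A` of word automata -/

inductive WObj (A : Type) : Type where
  | left | center | right

inductive WEdge {A : Type} : WObj A → WObj A → Type where
  | tri : WEdge WObj.left WObj.center
  | letter (a : A) : WEdge WObj.center WObj.center
  | tril : WEdge WObj.center WObj.right

instance (A : Type) : Quiver (WObj A) := ⟨WEdge⟩

/-- `I_A`: the free category on the graph `left -▷→ center -a→ center -◁→ right`. -/
def IA (A : Type) : Type := Paths (WObj A)

instance (A : Type) : Category (IA A) :=
  inferInstanceAs (Category (Paths (WObj A)))

def IA.l (A : Type) : IA A := WObj.left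
def IA.c (A : Type) : IA A := WObj.center
def IA.r (A : Type) : IA A := WObj.right

/-- The generating morphism `▷ : left ⟶ center`. -/
def IA.tri (A : Type) : IA.l A ⟶ IA.c A := Quiver.Hom.toPath WEdge.tri
/-- The generating morphism `a : center ⟶ center` for a letter `a`. -/
def IA.letter {A : Type} (a : A) : IA.c A ⟶ IA.c A := Quiver.Hom.toPath (WEdge.letter a)
/-- The generating morphism `◁ : center ⟶ right`. -/
def IA.tril (A : Type) : IA.c A ⟶ IA.r A := Quiver.Hom.toPath WEdge.tril

/-- The word spelled by a path in the graph (the sequence of `letter` edges used). -/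
def toWord {A : Type} : ∀ {X Y : WObj A}, Quiver.Path X Y → List A
  | _, _, Quiver.Path.nil => []
  | _, _, Quiver.Path.cons p e =>
      toWord p ++ (match e with
        | WEdge.letter a => [a]
        | _ => [])

/-- The path `center → center` spelling a word `w`. -/
def pathCC {A : Type} : List A → ((IA.c A) ⟶ (IA.c A))
  | [] => Quiver.Path.nil
  | a :: w => (Quiver.Hom.toPath (WEdge.letter a)).comp (pathCC w)

/-- The path `▷ w ◁ : left ⟶ right` spelling a word `w`. -/
def pathLR {A : Type} (w : List A) : (IA.l A) ⟶ (IA.r A) :=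
  IA.tri A ≫ pathCC w ≫ IA.tril A

theorem path_from_right {A : Type} : ∀ {Z : WObj A},
    Quiver.Path (WObj.right : WObj A) Z → Z = WObj.right
  | _, Quiver.Path.nil => rfl
  | _, Quiver.Path.cons p e => by
      have h := path_from_right p
      subst h
      exact nomatch e

theorem path_ll_nil {A : Type} (p : Quiver.Path (WObj.left : WObj A) WObj.left) :
    p = Quiver.Path.nil := by
  cases p with
  | nil => rfl
  | cons q e => exact nomatch e

theorem path_rr_nil {A : Type} (p : Quiver.Path (WObj.right : WObj A) WObj.right) :
    p = Quiver.Path.nil := by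
  cases p with
  | nil => rfl
  | cons q e =>
      have h := path_from_right q
      subst h
      exact nomatch e

theorem path_rl_false {A : Type} (p : Quiver.Path (WObj.right : WObj A) WObj.left) :
    False := by
  have := path_from_right p
  exact nomatch this

/-- `O_A`: the full subcategory of `I_A` on the objects `left` and `right`. -/
def OA (A : Type) : Type := ObjectProperty.FullSubcategory (fun X : IA A => X ≠ IA.c A)

instance (A : Type) : Category (OA A) :=
  inferInstanceAs (Category (ObjectProperty.FullSubcategory (fun X : IA A => X ≠ IA.c A)))

/-- The inclusion functor `ι : O_A ⥤ I_A`. -/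
def OA.inc (A : Type) : OA A ⥤ IA A := ObjectProperty.ι _

def OA.l (A : Type) : OA A := ⟨IA.l A, fun h => by cases h⟩
def OA.r (A : Type) : OA A := ⟨IA.r A, fun h => by cases h⟩

/-- The morphism `▷ w ◁ : left ⟶ right` of `O_A`. -/
def OA.word {A : Type} (w : List A) : OA.l A ⟶ OA.r A := InducedCategory.homMk (pathLR w)

/-- The language `O_A ⥤ C` determined by two objects `LI`, `LO` of `C` and a function
assigning to every word `w ∈ A*` a morphism `LI ⟶ LO` (the value at `▷w◁`). -/
def mkLang {A : Type} {C : Type u} [Category.{v} C] (LI LO : C)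
    (f : List A → (LI ⟶ LO)) : OA A ⥤ C where
  obj X :=
    match X with
    | ⟨WObj.left, _⟩ => LI
    | ⟨WObj.right, _⟩ => LO
    | ⟨WObj.center, h⟩ => absurd rfl h
  map {X Y} p :=
    match X, Y, p with
    | ⟨WObj.left, _⟩, ⟨WObj.left, _⟩, _ => 𝟙 LI
    | ⟨WObj.left, _⟩, ⟨WObj.right, _⟩, p => f (toWord p.hom)
    | ⟨WObj.right, _⟩, ⟨WObj.right, _⟩, _ => 𝟙 LO
    | ⟨WObj.right, _⟩, ⟨WObj.left, _⟩, p => (path_rl_false p.hom).elim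
    | ⟨WObj.center, h⟩, _, _ => absurd rfl h
    | _, ⟨WObj.center, h⟩, _ => absurd rfl h
  map_id X := by
    rcases X with ⟨(_|_|_), hX⟩
    · rfl
    · exact absurd rfl hX
    · rfl
  map_comp {X Y Z} p q := by
    rcases X with ⟨(_|_|_), hX⟩ <;> rcases Y with ⟨(_|_|_), hY⟩ <;>
      rcases Z with ⟨(_|_|_), hZ⟩ <;> rcases p with ⟨p⟩ <;> rcases q with ⟨q⟩ <;>
      first
        | exact absurd rfl hX
        | exact absurd rfl hY
        | exact absurd rfl hZ
        | exact (path_rl_false p).elim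
        | exact (path_rl_false q).elim
        | exact (Category.id_comp _).symm
        | (have hp := path_ll_nil p
           subst hp
           show f (toWord (Quiver.Path.comp Quiver.Path.nil q)) = 𝟙 LI ≫ f (toWord q)
           exact (congrArg (fun r => f (toWord r))
               (Quiver.Path.nil_comp (q : Quiver.Path (WObj.left : WObj A) WObj.right))).trans
               (Category.id_comp _).symm)
        | (have hq := path_rr_nil q
           subst hq
           show f (toWord (Quiver.Path.comp p Quiver.Path.nil)) = f (toWord p) ≫ 𝟙 LO
           exact (Category.comp_id _).symm)

/-- A `C`-automaton `M` accepts the `C`-language `L` when `ι ⋙ M = L`. -/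
def Accepts {A : Type} {C : Type u} [Category.{v} C] (M : IA A ⥤ C) (L : OA A ⥤ C) : Prop :=
  OA.inc A ⋙ M = L

/-- The category `Auto(L)` of `C`-automata accepting the language `L`; morphisms are
natural transformations whose whiskering along `ι` is the identity of `L`. -/
def Auto (A : Type) {C : Type u} [Category.{v} C] (L : OA A ⥤ C) : Type _ :=
  { M : IA A ⥤ C // Accepts M L }

instance (A : Type) {C : Type u} [Category.{v} C] (L : OA A ⥤ C) :
    Category (Auto A L) where
  Hom M N := { α : M.1 ⟶ N.1 //
    CategoryTheory.Functor.whiskerLeft (OA.inc A) α = eqToHom (M.2.trans N.2.symm) }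
  id M := ⟨𝟙 M.1, by simp⟩
  comp {M N P} f g := ⟨f.1 ≫ g.1, by
    rw [CategoryTheory.Functor.whiskerLeft_comp, f.2, g.2, eqToHom_trans]⟩
  id_comp f := Subtype.ext (Category.id_comp _)
  comp_id f := Subtype.ext (Category.comp_id _)
  assoc f g h := Subtype.ext (Category.assoc _ _ _)

/-- The functor `St : Auto(L) ⥤ C` evaluating an automaton at the object `center`. -/
def St (A : Type) {C : Type u} [Category.{v} C] (L : OA A ⥤ C) : Auto A L ⥤ C where
  obj M := M.1.obj (IA.c A)
  map f := f.1.app (IA.c A)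
  map_id _ := rfl
  map_comp _ _ := rfl

/-- The underlying natural transformation of a morphism in `Auto(L)`. -/
def Auto.nat {A : Type} {C : Type u} [Category.{v} C] {L : OA A ⥤ C} {M N : Auto A L}
    (α : M ⟶ N) : M.1 ⟶ N.1 :=
  (show { β : M.1 ⟶ N.1 //
      CategoryTheory.Functor.whiskerLeft (OA.inc A) β = eqToHom (M.2.trans N.2.symm) } from α).1

/-- A factorization system `(E, M)` on a category `K`: both classes contain all isomorphisms
and are closed under composition, every morphism factors as an `E`-morphism followed by an
`M`-morphism (with a chosen middle object `mid f`), and unique diagonal fill-ins exist. -/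
structure FactorizationSystem (K : Type u) [Category.{v} K] where
  E : MorphismProperty K
  M : MorphismProperty K
  E_iso : ∀ {X Y : K} (f : X ⟶ Y), IsIso f → E f
  M_iso : ∀ {X Y : K} (f : X ⟶ Y), IsIso f → M f
  E_comp : ∀ {X Y Z : K} (f : X ⟶ Y) (g : Y ⟶ Z), E f → E g → E (f ≫ g)
  M_comp : ∀ {X Y Z : K} (f : X ⟶ Y) (g : Y ⟶ Z), M f → M g → M (f ≫ g)
  mid : ∀ {X Y : K}, (X ⟶ Y) → K
  e : ∀ {X Y : K} (f : X ⟶ Y), X ⟶ mid f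
  m : ∀ {X Y : K} (f : X ⟶ Y), mid f ⟶ Y
  e_mem : ∀ {X Y : K} (f : X ⟶ Y), E (e f)
  m_mem : ∀ {X Y : K} (f : X ⟶ Y), M (m f)
  fac : ∀ {X Y : K} (f : X ⟶ Y), e f ≫ m f = f
  diagonal : ∀ {X Y X' Y' : K} (u : X ⟶ Y) (v : X' ⟶ Y') (f : X ⟶ X') (g : Y ⟶ Y'),
    E u → M v → u ≫ g = f ≫ v → ∃! d : Y ⟶ X', u ≫ d = f ∧ d ≫ v = g




section MinAux

variable {A : Type} {C : Type u} [Category.{v} C]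

/-- Composite of letter endomorphisms along a word. -/
def dpath {Q : C} (δ : A → (Q ⟶ Q)) : List A → (Q ⟶ Q)
  | [] => 𝟙 Q
  | a :: w => δ a ≫ dpath δ w

lemma dpath_nil {Q : C} (δ : A → (Q ⟶ Q)) : dpath δ [] = 𝟙 Q := by simp [dpath]

lemma dpath_cons {Q : C} (δ : A → (Q ⟶ Q)) (a : A) (w : List A) :
    dpath δ (a :: w) = δ a ≫ dpath δ w := by simp [dpath]

lemma dpath_append {Q : C} (δ : A → (Q ⟶ Q)) (u v : List A) :
    dpath δ (u ++ v) = dpath δ u ≫ dpath δ v := by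
  induction u with
  | nil => simp [dpath]
  | cons a u ih => simp [dpath, ih]

lemma dpath_comm {Q R : C} {δ : A → (Q ⟶ Q)} {δ' : A → (R ⟶ R)} (φ : Q ⟶ R)
    (h : ∀ a, δ a ≫ φ = φ ≫ δ' a) (w : List A) :
    dpath δ w ≫ φ = φ ≫ dpath δ' w := by
  induction w with
  | nil => simp [dpath]
  | cons a w ih =>
      rw [dpath_cons, dpath_cons, Category.assoc, ih, ← Category.assoc, h, Category.assoc]

lemma toWord_nil : toWord (Quiver.Path.nil (a := (WObj.left : WObj A))) = [] := by
  simp [toWord]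

lemma toWord_cons_tri (q : Quiver.Path (WObj.left : WObj A) WObj.left) :
    toWord (Quiver.Path.cons q WEdge.tri) = toWord q := by simp [toWord]

lemma toWord_cons_letter {X : WObj A} (q : Quiver.Path X WObj.center) (a : A) :
    toWord (Quiver.Path.cons q (WEdge.letter a)) = toWord q ++ [a] := by simp [toWord]

lemma toWord_cons_tril {X : WObj A} (q : Quiver.Path X WObj.center) :
    toWord (Quiver.Path.cons q WEdge.tril) = toWord q := by simp [toWord]

lemma pathCC_singleton (a : A) : pathCC [a] = IA.letter a :=
  Quiver.Path.comp_nil _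

lemma pathCC_append (u w : List A) :
    pathCC (u ++ w) = (pathCC u ≫ pathCC w : IA.c A ⟶ IA.c A) := by
  induction u with
  | nil => exact (Category.id_comp (obj := IA A) (pathCC w)).symm
  | cons a u ih =>
      show (IA.letter a ≫ pathCC (u ++ w) : IA.c A ⟶ IA.c A)
        = (IA.letter a ≫ pathCC u : IA.c A ⟶ IA.c A) ≫ pathCC w
      rw [ih, Category.assoc]

/-- The structure statement for paths out of `left`. -/
def lStruct : ∀ {Z : WObj A}, Quiver.Path (WObj.left : WObj A) Z → Prop
  | WObj.left, p => p = Quiver.Path.nil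
  | WObj.center, p => p = (IA.tri A ≫ pathCC (toWord p) : IA.l A ⟶ IA.c A)
  | WObj.right, p => p = pathLR (toWord p)

theorem path_l_struct {A : Type} :
    ∀ {Z : WObj A} (p : Quiver.Path (WObj.left : WObj A) Z), lStruct p
  | _, Quiver.Path.nil => rfl
  | _, Quiver.Path.cons q WEdge.tri => by
      have hq := path_ll_nil q
      subst hq
      show Quiver.Path.cons Quiver.Path.nil WEdge.tri
        = (IA.tri A ≫ pathCC (toWord (Quiver.Path.cons
            (Quiver.Path.nil (a := (WObj.left : WObj A))) WEdge.tri)) : IA.l A ⟶ IA.c A)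
      rw [toWord_cons_tri, toWord_nil]
      exact (Category.comp_id (obj := IA A) (IA.tri A)).symm
  | _, Quiver.Path.cons q (WEdge.letter a) => by
      have ih : q = (IA.tri A ≫ pathCC (toWord q) : IA.l A ⟶ IA.c A) := path_l_struct q
      show Quiver.Path.cons q (WEdge.letter a)
        = (IA.tri A ≫ pathCC (toWord (Quiver.Path.cons q (WEdge.letter a))) : IA.l A ⟶ IA.c A)
      rw [toWord_cons_letter, pathCC_append, pathCC_singleton]
      conv_lhs => rw [ih]
      exact Category.assoc (obj := IA A) (IA.tri A) (pathCC (toWord q)) (IA.letter a)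
  | _, Quiver.Path.cons q WEdge.tril => by
      have ih : q = (IA.tri A ≫ pathCC (toWord q) : IA.l A ⟶ IA.c A) := path_l_struct q
      show Quiver.Path.cons q WEdge.tril = pathLR (toWord (Quiver.Path.cons q WEdge.tril))
      rw [toWord_cons_tril]
      conv_lhs => rw [ih]
      exact Category.assoc (obj := IA A) (IA.tri A) (pathCC (toWord q)) (IA.tril A)

lemma path_lr_eq {A : Type} (p : Quiver.Path (WObj.left : WObj A) WObj.right) :
    p = pathLR (toWord p) :=
  path_l_struct p

lemma mapPathCC (F : IA A ⥤ C) (w : List A) :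
    F.map (pathCC w) = dpath (fun a => F.map (IA.letter a)) w := by
  induction w with
  | nil => exact F.map_id (IA.c A)
  | cons a w ih =>
      have h : pathCC (a :: w) = (IA.letter a : IA.c A ⟶ IA.c A) ≫ pathCC w := rfl
      rw [h, F.map_comp, ih, dpath_cons]

lemma mapPathLR (F : IA A ⥤ C) (w : List A) :
    F.map (pathLR w) = F.map (IA.tri A) ≫ F.map (pathCC w) ≫ F.map (IA.tril A) := by
  show F.map (IA.tri A ≫ pathCC w ≫ IA.tril A) = _
  rw [F.map_comp, F.map_comp]

/-- Natural transformations between functors out of `I_A` from edgewise naturality. -/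
def natTransOfEdges {F G : IA A ⥤ C} (app : ∀ X : WObj A, F.obj X ⟶ G.obj X)
    (h : ∀ {X Y : WObj A} (e : WEdge X Y),
      F.map (Quiver.Hom.toPath e) ≫ app Y = app X ≫ G.map (Quiver.Hom.toPath e)) :
    F ⟶ G where
  app := app
  naturality X Y p := by
    induction p using Quiver.Path.rec with
    | nil =>
        show F.map (𝟙 X) ≫ app X = app X ≫ G.map (𝟙 X)
        simp
    | @cons Y' Z q e ih =>
        have hq : F.map (Quiver.Path.cons q e)
            = F.map (X := X) (Y := Y') q ≫ F.map (Quiver.Hom.toPath e) := by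
          erw [← F.map_comp]; rfl
        have hq' : G.map (Quiver.Path.cons q e)
            = G.map (X := X) (Y := Y') q ≫ G.map (Quiver.Hom.toPath e) := by
          erw [← G.map_comp]; rfl
        erw [hq, hq', Category.assoc, h e, ← Category.assoc, ih, Category.assoc]

lemma OA_cases (X : OA A) : X = OA.l A ∨ X = OA.r A := by
  obtain ⟨(_ | _ | _), hX⟩ := X
  · exact Or.inl rfl
  · exact absurd rfl hX
  · exact Or.inr rfl

end MinAux
section MinAux2

variable {A : Type} {C : Type u} [Category.{v} C] {L : OA A ⥤ C}

/-- The prefunctor underlying an automaton given by concrete data. -/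
def mkPre (L : OA A ⥤ C) (Q : C) (i : L.obj (OA.l A) ⟶ Q) (δ : A → (Q ⟶ Q))
    (f : Q ⟶ L.obj (OA.r A)) : Prefunctor (WObj A) C where
  obj X := match X with
    | WObj.left => L.obj (OA.l A)
    | WObj.center => Q
    | WObj.right => L.obj (OA.r A)
  map e := match e with
    | WEdge.tri => i
    | WEdge.letter a => δ a
    | WEdge.tril => f

/-- The functor `I_A ⥤ C` given by concrete automaton data. -/
def mkFun (L : OA A ⥤ C) (Q : C) (i : L.obj (OA.l A) ⟶ Q) (δ : A → (Q ⟶ Q))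
    (f : Q ⟶ L.obj (OA.r A)) : IA A ⥤ C :=
  CategoryTheory.Paths.lift (mkPre L Q i δ f)

lemma mkFun_tri (Q : C) (i : L.obj (OA.l A) ⟶ Q) (δ : A → (Q ⟶ Q))
    (f : Q ⟶ L.obj (OA.r A)) : (mkFun L Q i δ f).map (IA.tri A) = i :=
  Paths.lift_toPath (mkPre L Q i δ f) WEdge.tri

lemma mkFun_letter (Q : C) (i : L.obj (OA.l A) ⟶ Q) (δ : A → (Q ⟶ Q))
    (f : Q ⟶ L.obj (OA.r A)) (a : A) : (mkFun L Q i δ f).map (IA.letter a) = δ a :=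
  Paths.lift_toPath (mkPre L Q i δ f) (WEdge.letter a)

lemma mkFun_tril (Q : C) (i : L.obj (OA.l A) ⟶ Q) (δ : A → (Q ⟶ Q))
    (f : Q ⟶ L.obj (OA.r A)) : (mkFun L Q i δ f).map (IA.tril A) = f :=
  Paths.lift_toPath (mkPre L Q i δ f) WEdge.tril

lemma mkFun_pathLR (Q : C) (i : L.obj (OA.l A) ⟶ Q) (δ : A → (Q ⟶ Q))
    (f : Q ⟶ L.obj (OA.r A)) (w : List A) :
    (mkFun L Q i δ f).map (pathLR w) = i ≫ dpath δ w ≫ f := by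
  have hδ : (fun a => (mkFun L Q i δ f).map (IA.letter a)) = δ :=
    funext (mkFun_letter Q i δ f)
  rw [mapPathLR, mapPathCC, mkFun_tri, mkFun_tril, hδ]
  rfl

/-- The automaton given by concrete data, provided it accepts `L` on words. -/
def mkAuto (L : OA A ⥤ C) (Q : C) (i : L.obj (OA.l A) ⟶ Q) (δ : A → (Q ⟶ Q))
    (f : Q ⟶ L.obj (OA.r A))
    (spec : ∀ w : List A, i ≫ dpath δ w ≫ f = L.map (OA.word w)) : Auto A L := by
  refine ⟨mkFun L Q i δ f, ?_⟩
  apply CategoryTheory.Functor.ext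
  case h_obj =>
    intro X
    rcases OA_cases X with rfl | rfl <;> rfl
  case h_map =>
    intro X Y p
    rcases OA_cases X with rfl | rfl <;> rcases OA_cases Y with rfl | rfl
    · -- l to l : p is nil
      have hp : p = 𝟙 (OA.l A) := InducedCategory.hom_ext (path_ll_nil p.hom)
      subst hp
      simp only [Functor.map_id, CategoryTheory.Functor.comp_map]
      show (mkFun L Q i δ f).map (𝟙 (IA.l A)) = _
      simp
      rfl
    · -- l to r
      have hp : (p.hom : Quiver.Path (WObj.left : WObj A) WObj.right) = pathLR (toWord p.hom) :=
        path_lr_eq p.hom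
      show (mkFun L Q i δ f).map (X := IA.l A) (Y := IA.r A) p.hom = _
      conv_lhs => rw [hp]
      rw [mkFun_pathLR, spec]
      have : L.map (OA.word (toWord p.hom)) = L.map p := by
        congr 1
        exact InducedCategory.hom_ext hp.symm
      rw [this]
      simp
      erw [eqToHom_refl, eqToHom_refl, Category.id_comp, Category.comp_id]
    · exact absurd (path_rl_false p.hom) not_false
    · have hp : p = 𝟙 (OA.r A) := InducedCategory.hom_ext (path_rr_nil p.hom)
      subst hp
      simp only [Functor.map_id, CategoryTheory.Functor.comp_map]
      show (mkFun L Q i δ f).map (𝟙 (IA.r A)) = _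
      simp
      rfl

end MinAux2
section MinAux3

variable {A : Type} {C : Type u} [Category.{v} C] {L : OA A ⥤ C}

lemma auto_hl (M : Auto A L) : M.1.obj (IA.l A) = L.obj (OA.l A) :=
  Functor.congr_obj M.2 (OA.l A)

lemma auto_hr (M : Auto A L) : M.1.obj (IA.r A) = L.obj (OA.r A) :=
  Functor.congr_obj M.2 (OA.r A)

/-- State object of an automaton. -/
def stM (M : Auto A L) : C := M.1.obj (IA.c A)

/-- Initial structure map. -/
def iM (M : Auto A L) : L.obj (OA.l A) ⟶ stM M :=
  eqToHom (auto_hl M).symm ≫ M.1.map (IA.tri A)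

/-- Letter action. -/
def dM (M : Auto A L) (a : A) : stM M ⟶ stM M := M.1.map (IA.letter a)

/-- Final structure map. -/
def fM (M : Auto A L) : stM M ⟶ L.obj (OA.r A) :=
  M.1.map (IA.tril A) ≫ eqToHom (auto_hr M)

lemma specM (M : Auto A L) (w : List A) :
    iM M ≫ dpath (dM M) w ≫ fM M = L.map (OA.word w) := by
  have h := Functor.congr_hom M.2 (OA.word w)
  have h2 : M.1.map (pathLR w)
      = eqToHom (auto_hl M) ≫ L.map (OA.word w) ≫ eqToHom (auto_hr M).symm := h
  have h3 : M.1.map (pathLR w)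
      = M.1.map (IA.tri A) ≫ dpath (dM M) w ≫ M.1.map (IA.tril A) := by
    erw [mapPathLR, mapPathCC]; rfl
  erw [iM, fM]
  erw [Category.assoc, ← Category.assoc (dpath (dM M) w), ← Category.assoc (M.1.map (IA.tri A)), ← h3]
  rw [h2]
  simp

lemma mkAuto_stM (Q : C) (i : L.obj (OA.l A) ⟶ Q) (δ : A → (Q ⟶ Q))
    (f : Q ⟶ L.obj (OA.r A)) (spec) : stM (mkAuto L Q i δ f spec) = Q := rfl

lemma mkAuto_iM (Q : C) (i : L.obj (OA.l A) ⟶ Q) (δ : A → (Q ⟶ Q))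
    (f : Q ⟶ L.obj (OA.r A)) (spec) : iM (mkAuto L Q i δ f spec) = i := by
  rw [iM]
  show eqToHom _ ≫ (mkFun L Q i δ f).map (IA.tri A) = i
  erw [mkFun_tri, eqToHom_refl, Category.id_comp]

lemma mkAuto_dM (Q : C) (i : L.obj (OA.l A) ⟶ Q) (δ : A → (Q ⟶ Q))
    (f : Q ⟶ L.obj (OA.r A)) (spec) (a : A) : dM (mkAuto L Q i δ f spec) a = δ a := by
  rw [dM]
  exact mkFun_letter Q i δ f a

lemma mkAuto_fM (Q : C) (i : L.obj (OA.l A) ⟶ Q) (δ : A → (Q ⟶ Q))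
    (f : Q ⟶ L.obj (OA.r A)) (spec) : fM (mkAuto L Q i δ f spec) = f := by
  rw [fM]
  show (mkFun L Q i δ f).map (IA.tril A) ≫ eqToHom _ = f
  erw [mkFun_tril, eqToHom_refl, Category.comp_id]

/-- The whiskering condition of a morphism of automata. -/
lemma auto_cond {M N : Auto A L} (τ : M ⟶ N) :
    CategoryTheory.Functor.whiskerLeft (OA.inc A) (Auto.nat τ) = eqToHom (M.2.trans N.2.symm) :=
  (show { β : M.1 ⟶ N.1 //
      CategoryTheory.Functor.whiskerLeft (OA.inc A) β = eqToHom (M.2.trans N.2.symm) } from τ).2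

lemma auto_app_left {M N : Auto A L} (τ : M ⟶ N) :
    (Auto.nat τ).app (IA.l A) = eqToHom ((auto_hl M).trans (auto_hl N).symm) := by
  have h := NatTrans.congr_app (auto_cond τ) (OA.l A)
  rw [eqToHom_app] at h
  exact h

lemma auto_app_right {M N : Auto A L} (τ : M ⟶ N) :
    (Auto.nat τ).app (IA.r A) = eqToHom ((auto_hr M).trans (auto_hr N).symm) := by
  have h := NatTrans.congr_app (auto_cond τ) (OA.r A)
  rw [eqToHom_app] at h
  exact h

/-- Center component of a morphism of automata. -/
def cM {M N : Auto A L} (τ : M ⟶ N) : stM M ⟶ stM N := (Auto.nat τ).app (IA.c A)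

lemma hom_iM {M N : Auto A L} (τ : M ⟶ N) : iM M ≫ cM τ = iM N := by
  have h := (Auto.nat τ).naturality (IA.tri A)
  erw [iM, iM, Category.assoc, cM, h, auto_app_left τ, ← Category.assoc, eqToHom_trans]

lemma hom_dM {M N : Auto A L} (τ : M ⟶ N) (a : A) :
    dM M a ≫ cM τ = cM τ ≫ dM N a :=
  (Auto.nat τ).naturality (IA.letter a)

lemma hom_fM {M N : Auto A L} (τ : M ⟶ N) : fM M = cM τ ≫ fM N := by
  have h := (Auto.nat τ).naturality (IA.tril A)
  erw [fM, fM, ← Category.assoc, cM, ← h, auto_app_right τ, Category.assoc, eqToHom_trans]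

lemma auto_hom_ext {M N : Auto A L} (τ σ : M ⟶ N) (h : cM τ = cM σ) : τ = σ := by
  apply Subtype.ext
  apply NatTrans.ext
  funext X
  match X with
  | WObj.left =>
      show (Auto.nat τ).app (IA.l A) = (Auto.nat σ).app (IA.l A)
      rw [auto_app_left τ, auto_app_left σ]
  | WObj.center => exact h
  | WObj.right =>
      show (Auto.nat τ).app (IA.r A) = (Auto.nat σ).app (IA.r A)
      rw [auto_app_right τ, auto_app_right σ]

/-- Construct a morphism of automata from a center map commuting with the structure. -/
def mkHom (M N : Auto A L) (φ : stM M ⟶ stM N)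
    (h1 : iM M ≫ φ = iM N) (h2 : ∀ a, dM M a ≫ φ = φ ≫ dM N a)
    (h3 : fM M = φ ≫ fM N) : M ⟶ N := by
  refine ⟨natTransOfEdges (fun X => match X with
    | WObj.left => eqToHom ((auto_hl M).trans (auto_hl N).symm)
    | WObj.center => φ
    | WObj.right => eqToHom ((auto_hr M).trans (auto_hr N).symm)) ?_, ?_⟩
  · intro X Y e
    match e with
    | WEdge.tri =>
        show M.1.map (IA.tri A) ≫ φ = eqToHom _ ≫ N.1.map (IA.tri A)
        have : M.1.map (IA.tri A) = eqToHom (auto_hl M) ≫ iM M := by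
          erw [iM, ← Category.assoc, eqToHom_trans, eqToHom_refl, Category.id_comp]
        erw [this, Category.assoc, h1, iM, ← Category.assoc, eqToHom_trans]
        rfl
    | WEdge.letter a => exact h2 a
    | WEdge.tril =>
        show M.1.map (IA.tril A) ≫ eqToHom _ = φ ≫ N.1.map (IA.tril A)
        have hM : M.1.map (IA.tril A) = fM M ≫ eqToHom (auto_hr M).symm := by
          erw [fM, Category.assoc, eqToHom_trans, eqToHom_refl, Category.comp_id]
        have hN : N.1.map (IA.tril A) = fM N ≫ eqToHom (auto_hr N).symm := by
          erw [fM, Category.assoc, eqToHom_trans, eqToHom_refl, Category.comp_id]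
        rw [hM, hN, h3]
        simp [eqToHom_trans]
        erw [Category.assoc, Category.assoc, eqToHom_trans]
        rfl
  · apply NatTrans.ext
    funext X
    rcases OA_cases X with rfl | rfl
    · show _ = (eqToHom (M.2.trans N.2.symm)).app (OA.l A)
      rw [eqToHom_app]
      rfl
    · show _ = (eqToHom (M.2.trans N.2.symm)).app (OA.r A)
      rw [eqToHom_app]
      rfl

lemma mkHom_cM (M N : Auto A L) (φ : stM M ⟶ stM N) (h1) (h2) (h3) :
    cM (mkHom M N φ h1 h2 h3) = φ := rfl

lemma mkHom_app {M N : Auto A L} (φ : stM M ⟶ stM N) (h1) (h2) (h3) (X : WObj A) :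
    (Auto.nat (mkHom M N φ h1 h2 h3)).app X
      = (match X with
        | WObj.left => eqToHom ((auto_hl M).trans (auto_hl N).symm)
        | WObj.center => φ
        | WObj.right => eqToHom ((auto_hr M).trans (auto_hr N).symm)) := rfl

end MinAux3
section MinAux4

variable {A : Type} {C : Type u} [Category.{v} C]

/-- Index type for words, lifted to the appropriate universe. -/
abbrev Wd (A : Type) : Type v := ULift.{v} (List A)

variable [HasColimits C] [HasLimits C] (L : OA A ⥤ C)
set_option linter.unusedSectionVars false
set_option linter.unusedVariables false

noncomputable section

/-- State object of the initial automaton. -/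
def IIQ : C := ∐ (fun _ : Wd A => L.obj (OA.l A))

def IIi : L.obj (OA.l A) ⟶ IIQ L := Sigma.ι (fun _ : Wd A => L.obj (OA.l A)) (ULift.up [])

def IId (a : A) : IIQ L ⟶ IIQ L :=
  Sigma.desc (fun w => Sigma.ι (fun _ : Wd A => L.obj (OA.l A)) (ULift.up (w.down ++ [a])))

def IIf : IIQ L ⟶ L.obj (OA.r A) := Sigma.desc (fun w => L.map (OA.word w.down))

lemma II_dpath (u : List A) (w : List A) :
    Sigma.ι (fun _ : Wd A => L.obj (OA.l A)) (ULift.up u) ≫ dpath (IId L) w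
      = Sigma.ι (fun _ : Wd A => L.obj (OA.l A)) (ULift.up (u ++ w)) := by
  induction w generalizing u with
  | nil => erw [dpath_nil, Category.comp_id, List.append_nil]
  | cons a w ih =>
      erw [dpath_cons, ← Category.assoc, IId, Sigma.ι_desc, ih, List.append_assoc]
      rfl

lemma II_spec (w : List A) : IIi L ≫ dpath (IId L) w ≫ IIf L = L.map (OA.word w) := by
  erw [IIi, ← Category.assoc, II_dpath, IIf, Sigma.ι_desc]
  simp

/-- The initial automaton. -/
def IIA : Auto A L := mkAuto L (IIQ L) (IIi L) (IId L) (IIf L) (II_spec L)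

lemma IIA_iM : iM (IIA L) = IIi L := mkAuto_iM _ _ _ _ _
lemma IIA_dM (a : A) : dM (IIA L) a = IId L a := mkAuto_dM _ _ _ _ _ _
lemma IIA_fM : fM (IIA L) = IIf L := mkAuto_fM _ _ _ _ _

lemma IIA_dpath (u : List A) (w : List A) :
    Sigma.ι (fun _ : Wd A => L.obj (OA.l A)) (ULift.up u) ≫ dpath (dM (IIA L)) w
      = Sigma.ι (fun _ : Wd A => L.obj (OA.l A)) (ULift.up (u ++ w)) := by
  have h : dM (IIA L) = IId L := funext (IIA_dM L)
  rw [h, II_dpath]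

/-- Center component of the canonical map out of the initial automaton. -/
def toC (M : Auto A L) : stM (IIA L) ⟶ stM M :=
  Sigma.desc (fun w => iM M ≫ dpath (dM M) w.down)

lemma toC_i (M : Auto A L) : iM (IIA L) ≫ toC L M = iM M := by
  erw [IIA_iM, IIi, toC, Sigma.ι_desc]
  simp [dpath_nil]

lemma toC_d (M : Auto A L) (a : A) :
    dM (IIA L) a ≫ toC L M = toC L M ≫ dM M a := by
  apply Sigma.hom_ext
  intro w
  erw [IIA_dM, ← Category.assoc, IId, Sigma.ι_desc, toC, Sigma.ι_desc,
    ← Category.assoc, Sigma.ι_desc, Category.assoc]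
  simp only [ULift.down_up]
  rw [dpath_append]
  simp [dpath]
  erw [iM, Category.assoc]

lemma toC_f (M : Auto A L) : fM (IIA L) = toC L M ≫ fM M := by
  apply Sigma.hom_ext
  intro w
  erw [IIA_fM, IIf, Sigma.ι_desc, ← Category.assoc, toC, Sigma.ι_desc, Category.assoc,
    specM M]

/-- The canonical map out of the initial automaton. -/
def fromII (M : Auto A L) : IIA L ⟶ M :=
  mkHom (IIA L) M (toC L M) (toC_i L M) (toC_d L M) (toC_f L M)

lemma fromII_unique {M : Auto A L} (τ : IIA L ⟶ M) : τ = fromII L M := by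
  apply auto_hom_ext
  rw [fromII, mkHom_cM]
  apply Sigma.hom_ext
  intro w
  have h1 : Sigma.ι (fun _ : Wd A => L.obj (OA.l A)) w
      = iM (IIA L) ≫ dpath (dM (IIA L)) w.down := by
    erw [IIA_iM, IIi, IIA_dpath]
    rfl
  erw [toC, Sigma.ι_desc, h1, Category.assoc, dpath_comm (cM τ) (hom_dM τ), ← Category.assoc,
    hom_iM τ]

def II_isInitial : IsInitial (IIA L) :=
  IsInitial.ofUniqueHom (fromII L) (fun M τ => fromII_unique L τ)

/-- State object of the final automaton. -/
def FFQ : C := ∏ᶜ (fun _ : Wd A => L.obj (OA.r A))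

def FFi : L.obj (OA.l A) ⟶ FFQ L := Pi.lift (fun w => L.map (OA.word w.down))

def FFd (a : A) : FFQ L ⟶ FFQ L :=
  Pi.lift (fun w => Pi.π (fun _ : Wd A => L.obj (OA.r A)) (ULift.up (a :: w.down)))

def FFf : FFQ L ⟶ L.obj (OA.r A) := Pi.π (fun _ : Wd A => L.obj (OA.r A)) (ULift.up [])

lemma FF_dpath (w u : List A) :
    dpath (FFd L) w ≫ Pi.π (fun _ : Wd A => L.obj (OA.r A)) (ULift.up u)
      = Pi.π (fun _ : Wd A => L.obj (OA.r A)) (ULift.up (w ++ u)) := by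
  induction w generalizing u with
  | nil => erw [dpath_nil, Category.id_comp, List.nil_append]
  | cons a w ih =>
      erw [dpath_cons, Category.assoc, ih, FFd, Pi.lift_π]
      rfl

lemma FF_spec (w : List A) : FFi L ≫ dpath (FFd L) w ≫ FFf L = L.map (OA.word w) := by
  erw [FFf, FF_dpath, List.append_nil, FFi, Pi.lift_π]

/-- The final automaton. -/
def FFA : Auto A L := mkAuto L (FFQ L) (FFi L) (FFd L) (FFf L) (FF_spec L)

lemma FFA_iM : iM (FFA L) = FFi L := mkAuto_iM _ _ _ _ _
lemma FFA_dM (a : A) : dM (FFA L) a = FFd L a := mkAuto_dM _ _ _ _ _ _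
lemma FFA_fM : fM (FFA L) = FFf L := mkAuto_fM _ _ _ _ _

lemma FFA_dpath (w u : List A) :
    dpath (dM (FFA L)) w ≫ Pi.π (fun _ : Wd A => L.obj (OA.r A)) (ULift.up u)
      = Pi.π (fun _ : Wd A => L.obj (OA.r A)) (ULift.up (w ++ u)) := by
  have h : dM (FFA L) = FFd L := funext (FFA_dM L)
  erw [h, FF_dpath]

/-- Center component of the canonical map into the final automaton. -/
def toF (M : Auto A L) : stM M ⟶ stM (FFA L) :=
  Pi.lift (fun w => dpath (dM M) w.down ≫ fM M)

lemma toF_i (M : Auto A L) : iM M ≫ toF L M = iM (FFA L) := by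
  rw [FFA_iM, FFi]
  apply Limits.Pi.hom_ext
  intro w
  erw [Category.assoc, toF, Pi.lift_π, Pi.lift_π, ← Category.assoc, Category.assoc, specM M]

lemma toF_d (M : Auto A L) (a : A) :
    dM M a ≫ toF L M = toF L M ≫ dM (FFA L) a := by
  apply Limits.Pi.hom_ext
  intro w
  erw [FFA_dM, Category.assoc, Category.assoc, FFd, Pi.lift_π, toF, Pi.lift_π, Pi.lift_π,
    ← Category.assoc, ← dpath_cons]

lemma toF_f (M : Auto A L) : fM M = toF L M ≫ fM (FFA L) := by
  erw [FFA_fM, FFf, toF, Pi.lift_π, dpath_nil, Category.id_comp]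

/-- The canonical map into the final automaton. -/
def toFF (M : Auto A L) : M ⟶ FFA L :=
  mkHom M (FFA L) (toF L M) (toF_i L M) (toF_d L M) (toF_f L M)

lemma toFF_unique {M : Auto A L} (τ : M ⟶ FFA L) : τ = toFF L M := by
  apply auto_hom_ext
  rw [toFF, mkHom_cM]
  apply Limits.Pi.hom_ext
  intro w
  have h1 : Pi.π (fun _ : Wd A => L.obj (OA.r A)) w
      = dpath (dM (FFA L)) w.down ≫ fM (FFA L) := by
    rw [FFA_fM, FFf, FFA_dpath, List.append_nil]
  erw [toF, Pi.lift_π, h1, ← Category.assoc, ← dpath_comm (cM τ) (hom_dM τ), Category.assoc,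
    ← hom_fM τ]

def FF_isTerminal : IsTerminal (FFA L) :=
  IsTerminal.ofUniqueHom (toFF L) (fun M τ => toFF_unique L τ)

end
end MinAux4
section MinAux5

variable {A : Type} {C : Type u} [Category.{v} C]

/-- Left cancellation for the `E`-class of a factorization system. -/
lemma E_cancel (FS : FactorizationSystem C) {X Y Z : C} (f : X ⟶ Y) (g : Y ⟶ Z)
    (hf : FS.E f) (hfg : FS.E (f ≫ g)) : FS.E g := by
  -- factor g and show that the M part is an isomorphism
  obtain ⟨d, ⟨hd1, hd2⟩, -⟩ := FS.diagonal (f ≫ g) (FS.m g) (f ≫ FS.e g) (𝟙 Z)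
    hfg (FS.m_mem g) (by rw [Category.comp_id, Category.assoc, FS.fac])
  have hmd : FS.m g ≫ d = 𝟙 (FS.mid g) := by
    obtain ⟨dd, -, huniq⟩ := FS.diagonal (f ≫ FS.e g) (FS.m g) (f ≫ FS.e g) (FS.m g)
      (FS.E_comp _ _ hf (FS.e_mem g)) (FS.m_mem g) rfl
    have h1 : (f ≫ FS.e g) ≫ FS.m g ≫ d = f ≫ FS.e g ∧ (FS.m g ≫ d) ≫ FS.m g = FS.m g := by
      constructor
      · rw [Category.assoc, ← Category.assoc (FS.e g), FS.fac, ← Category.assoc, hd1]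
      · rw [Category.assoc, hd2, Category.comp_id]
    have h2 : (f ≫ FS.e g) ≫ 𝟙 (FS.mid g) = f ≫ FS.e g ∧ 𝟙 (FS.mid g) ≫ FS.m g = FS.m g := by
      constructor <;> simp
    rw [huniq _ h1, huniq _ h2]
  have : IsIso (FS.m g) := ⟨d, hmd, hd2⟩
  rw [← FS.fac g]
  exact FS.E_comp _ _ (FS.e_mem g) (FS.E_iso _ this)

variable [HasColimits C] [HasLimits C] (L : OA A ⥤ C) (FS : FactorizationSystem C)

noncomputable section

/-- The center component of the canonical morphism `II ⟶ M`. -/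
abbrev canC (M : Auto A L) : stM (IIA L) ⟶ stM M := cM (fromII L M)

lemma canC_i (M : Auto A L) : iM (IIA L) ≫ canC L M = iM M := hom_iM _
lemma canC_d (M : Auto A L) (a : A) : dM (IIA L) a ≫ canC L M = canC L M ≫ dM M a := hom_dM _ a
lemma canC_f (M : Auto A L) : fM (IIA L) = canC L M ≫ fM M := hom_fM _

/-- Diagonal square for letters. -/
lemma Z_sq (M : Auto A L) (a : A) :
    FS.e (canC L M) ≫ (FS.m (canC L M) ≫ dM M a)
      = (dM (IIA L) a ≫ FS.e (canC L M)) ≫ FS.m (canC L M) := by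
  rw [← Category.assoc, FS.fac, Category.assoc, FS.fac, canC_d]

/-- The letter action on the image automaton. -/
def Zd (M : Auto A L) (a : A) : FS.mid (canC L M) ⟶ FS.mid (canC L M) :=
  (FS.diagonal (FS.e (canC L M)) (FS.m (canC L M)) (dM (IIA L) a ≫ FS.e (canC L M))
    (FS.m (canC L M) ≫ dM M a) (FS.e_mem _) (FS.m_mem _) (Z_sq L FS M a)).choose

lemma Zd_spec₁ (M : Auto A L) (a : A) :
    FS.e (canC L M) ≫ Zd L FS M a = dM (IIA L) a ≫ FS.e (canC L M) :=
  (FS.diagonal (FS.e (canC L M)) (FS.m (canC L M)) (dM (IIA L) a ≫ FS.e (canC L M))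
    (FS.m (canC L M) ≫ dM M a) (FS.e_mem _) (FS.m_mem _) (Z_sq L FS M a)).choose_spec.1.1

lemma Zd_spec₂ (M : Auto A L) (a : A) :
    Zd L FS M a ≫ FS.m (canC L M) = FS.m (canC L M) ≫ dM M a :=
  (FS.diagonal (FS.e (canC L M)) (FS.m (canC L M)) (dM (IIA L) a ≫ FS.e (canC L M))
    (FS.m (canC L M) ≫ dM M a) (FS.e_mem _) (FS.m_mem _) (Z_sq L FS M a)).choose_spec.1.2

lemma Zd_unique (M : Auto A L) (a : A) (d : FS.mid (canC L M) ⟶ FS.mid (canC L M))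
    (h1 : FS.e (canC L M) ≫ d = dM (IIA L) a ≫ FS.e (canC L M))
    (h2 : d ≫ FS.m (canC L M) = FS.m (canC L M) ≫ dM M a) : d = Zd L FS M a :=
  ((FS.diagonal (FS.e (canC L M)) (FS.m (canC L M)) (dM (IIA L) a ≫ FS.e (canC L M))
    (FS.m (canC L M) ≫ dM M a) (FS.e_mem _) (FS.m_mem _) (Z_sq L FS M a)).choose_spec.2
      d ⟨h1, h2⟩).trans
    (((FS.diagonal (FS.e (canC L M)) (FS.m (canC L M)) (dM (IIA L) a ≫ FS.e (canC L M))
      (FS.m (canC L M) ≫ dM M a) (FS.e_mem _) (FS.m_mem _)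
        (Z_sq L FS M a)).choose_spec.2 (Zd L FS M a) ⟨Zd_spec₁ L FS M a, Zd_spec₂ L FS M a⟩).symm)

lemma Z_spec (M : Auto A L) (w : List A) :
    (iM (IIA L) ≫ FS.e (canC L M)) ≫ dpath (Zd L FS M) w ≫ (FS.m (canC L M) ≫ fM M)
      = L.map (OA.word w) := by
  have h : dpath (dM (IIA L)) w ≫ FS.e (canC L M)
      = FS.e (canC L M) ≫ dpath (Zd L FS M) w :=
    dpath_comm (FS.e (canC L M)) (fun a => (Zd_spec₁ L FS M a).symm) w
  rw [Category.assoc, ← Category.assoc (FS.e (canC L M)), ← h, Category.assoc,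
    ← Category.assoc (FS.e (canC L M)), FS.fac, ← canC_f L M]
  exact specM (IIA L) w

/-- The image automaton of the canonical map `II ⟶ M`. -/
def ZA (M : Auto A L) : Auto A L :=
  mkAuto L (FS.mid (canC L M)) (iM (IIA L) ≫ FS.e (canC L M)) (Zd L FS M)
    (FS.m (canC L M) ≫ fM M) (Z_spec L FS M)

lemma ZA_iM (M : Auto A L) : iM (ZA L FS M) = iM (IIA L) ≫ FS.e (canC L M) :=
  mkAuto_iM _ _ _ _ _
lemma ZA_dM (M : Auto A L) (a : A) : dM (ZA L FS M) a = Zd L FS M a := mkAuto_dM _ _ _ _ _ _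
lemma ZA_fM (M : Auto A L) : fM (ZA L FS M) = FS.m (canC L M) ≫ fM M := mkAuto_fM _ _ _ _ _

/-- The `E`-part `II ⟶ Z(M)` as a morphism of automata. -/
def eZ (M : Auto A L) : IIA L ⟶ ZA L FS M :=
  mkHom _ _ (FS.e (canC L M))
    (by rw [ZA_iM]; rfl)
    (fun a => by erw [ZA_dM, Zd_spec₁]; rfl)
    (by erw [ZA_fM, ← Category.assoc, FS.fac, canC_f])

/-- The `M`-part `Z(M) ⟶ M` as a morphism of automata. -/
def mZ (M : Auto A L) : ZA L FS M ⟶ M :=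
  mkHom _ _ (FS.m (canC L M))
    (by erw [ZA_iM, Category.assoc, FS.fac, canC_i])
    (fun a => by erw [ZA_dM, Zd_spec₂]; rfl)
    (by rw [ZA_fM]; rfl)

lemma eZ_E (M : Auto A L) (X : IA A) : FS.E ((Auto.nat (eZ L FS M)).app X) := by
  match X with
  | WObj.left =>
      exact FS.E_iso (eqToHom ((auto_hl (IIA L)).trans (auto_hl (ZA L FS M)).symm))
        inferInstance
  | WObj.center => exact FS.e_mem _
  | WObj.right =>
      exact FS.E_iso (eqToHom ((auto_hr (IIA L)).trans (auto_hr (ZA L FS M)).symm))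
        inferInstance

lemma mZ_M (M : Auto A L) (X : IA A) : FS.M ((Auto.nat (mZ L FS M)).app X) := by
  match X with
  | WObj.left =>
      exact FS.M_iso (eqToHom ((auto_hl (ZA L FS M)).trans (auto_hl M).symm))
        inferInstance
  | WObj.center => exact FS.m_mem _
  | WObj.right =>
      exact FS.M_iso (eqToHom ((auto_hr (ZA L FS M)).trans (auto_hr M).symm))
        inferInstance

end
end MinAux5
section MinAux6

variable {A : Type} {C : Type u} [Category.{v} C]
variable [HasColimits C] [HasLimits C] (L : OA A ⥤ C) (FS : FactorizationSystem C)

noncomputable section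

set_option linter.unusedSectionVars false

lemma cM_comp {M N P : Auto A L} (τ : M ⟶ N) (σ : N ⟶ P) :
    cM (τ ≫ σ) = cM τ ≫ cM σ := rfl

/-- The minimal automaton: image of the canonical map `II ⟶ FF`. -/
def MinA : Auto A L := ZA L FS (FFA L)

lemma key_tri (M : Auto A L) : canC L M ≫ toF L M = canC L (FFA L) := by
  have h := fromII_unique L (fromII L M ≫ toFF L M)
  have h2 := congrArg cM h
  rw [cM_comp] at h2
  have h3 : cM (toFF L M) = toF L M := rfl
  rw [h3] at h2
  exact h2

lemma dd_sq (M : Auto A L) :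
    FS.e (canC L M) ≫ (FS.m (canC L M) ≫ toF L M) = FS.e (canC L (FFA L)) ≫ FS.m (canC L (FFA L)) := by
  rw [← Category.assoc, FS.fac, FS.fac, key_tri]

/-- Comparison map from the image of `II ⟶ M` to the minimal automaton. -/
def ddm (M : Auto A L) : FS.mid (canC L M) ⟶ FS.mid (canC L (FFA L)) :=
  (FS.diagonal (FS.e (canC L M)) (FS.m (canC L (FFA L))) (FS.e (canC L (FFA L)))
    (FS.m (canC L M) ≫ toF L M) (FS.e_mem _) (FS.m_mem _)
    (by rw [dd_sq])).choose

lemma ddm_spec₁ (M : Auto A L) :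
    FS.e (canC L M) ≫ ddm L FS M = FS.e (canC L (FFA L)) :=
  (FS.diagonal (FS.e (canC L M)) (FS.m (canC L (FFA L))) (FS.e (canC L (FFA L)))
    (FS.m (canC L M) ≫ toF L M) (FS.e_mem _) (FS.m_mem _)
    (by rw [dd_sq])).choose_spec.1.1

lemma ddm_spec₂ (M : Auto A L) :
    ddm L FS M ≫ FS.m (canC L (FFA L)) = FS.m (canC L M) ≫ toF L M :=
  (FS.diagonal (FS.e (canC L M)) (FS.m (canC L (FFA L))) (FS.e (canC L (FFA L)))
    (FS.m (canC L M) ≫ toF L M) (FS.e_mem _) (FS.m_mem _)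
    (by rw [dd_sq])).choose_spec.1.2

lemma ddm_d (M : Auto A L) (a : A) :
    Zd L FS M a ≫ ddm L FS M = ddm L FS M ≫ Zd L FS (FFA L) a := by
  have sq : FS.e (canC L M) ≫ (FS.m (canC L M) ≫ toF L M ≫ dM (FFA L) a)
      = (dM (IIA L) a ≫ FS.e (canC L (FFA L))) ≫ FS.m (canC L (FFA L)) := by
    rw [← Category.assoc, ← Category.assoc, FS.fac, Category.assoc, Category.assoc, FS.fac,
      ← Category.assoc, key_tri, canC_d]
  obtain ⟨d0, -, huniq⟩ := FS.diagonal (FS.e (canC L M)) (FS.m (canC L (FFA L)))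
    (dM (IIA L) a ≫ FS.e (canC L (FFA L))) (FS.m (canC L M) ≫ toF L M ≫ dM (FFA L) a)
    (FS.e_mem _) (FS.m_mem _) sq
  have hx : Zd L FS M a ≫ ddm L FS M = d0 := by
    apply huniq
    constructor
    · rw [← Category.assoc, Zd_spec₁, Category.assoc, ddm_spec₁]
    · rw [Category.assoc, ddm_spec₂, ← Category.assoc, Zd_spec₂, Category.assoc, toF_d]
  have hy : ddm L FS M ≫ Zd L FS (FFA L) a = d0 := by
    apply huniq
    constructor
    · rw [← Category.assoc, ddm_spec₁, Zd_spec₁]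
    · rw [Category.assoc, Zd_spec₂, ← Category.assoc, ddm_spec₂, Category.assoc]
  rw [hx, hy]

lemma ddm_E (M : Auto A L) : FS.E (ddm L FS M) :=
  E_cancel FS (FS.e (canC L M)) (ddm L FS M) (FS.e_mem _)
    (by rw [ddm_spec₁]; exact FS.e_mem _)

/-- The comparison morphism `Z(M) ⟶ Min` of automata. -/
def eeHom (M : Auto A L) : ZA L FS M ⟶ MinA L FS :=
  mkHom _ _ (ddm L FS M)
    (by
      show iM (ZA L FS M) ≫ ddm L FS M = iM (ZA L FS (FFA L))
      erw [ZA_iM, ZA_iM, Category.assoc, ddm_spec₁])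
    (fun a => by
      show dM (ZA L FS M) a ≫ ddm L FS M = ddm L FS M ≫ dM (ZA L FS (FFA L)) a
      erw [ZA_dM, ZA_dM, ddm_d]; rfl)
    (by
      show fM (ZA L FS M) = ddm L FS M ≫ fM (ZA L FS (FFA L))
      rw [ZA_fM, ZA_fM, ← Category.assoc, ddm_spec₂, Category.assoc, ← toF_f])

lemma eeHom_E (M : Auto A L) (X : IA A) : FS.E ((Auto.nat (eeHom L FS M)).app X) := by
  match X with
  | WObj.left =>
      exact FS.E_iso (eqToHom ((auto_hl (ZA L FS M)).trans (auto_hl (MinA L FS)).symm))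
        inferInstance
  | WObj.center => exact ddm_E L FS M
  | WObj.right =>
      exact FS.E_iso (eqToHom ((auto_hr (ZA L FS M)).trans (auto_hr (MinA L FS)).symm))
        inferInstance

end
end MinAux6
section MinAux7

variable {A : Type} {C : Type u} [Category.{v} C]
variable [HasColimits C] [HasLimits C] (L : OA A ⥤ C)

set_option linter.unusedSectionVars false

noncomputable section

lemma IIA_map_tri : (IIA L).1.map (IA.tri A) = IIi L := mkFun_tri _ _ _ _
lemma IIA_map_letter (a : A) : (IIA L).1.map (IA.letter a) = IId L a := mkFun_letter _ _ _ _ a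
lemma IIA_map_tril : (IIA L).1.map (IA.tril A) = IIf L := mkFun_tril _ _ _ _
lemma FFA_map_tri : (FFA L).1.map (IA.tri A) = FFi L := mkFun_tri _ _ _ _
lemma FFA_map_letter (a : A) : (FFA L).1.map (IA.letter a) = FFd L a := mkFun_letter _ _ _ _ a
lemma FFA_map_tril : (FFA L).1.map (IA.tril A) = FFf L := mkFun_tril _ _ _ _

lemma tri_pathCC_nil : (IA.tri A ≫ pathCC [] : IA.l A ⟶ IA.c A) = IA.tri A :=
  Category.comp_id _

lemma pathCC_nil_tril : (pathCC [] ≫ IA.tril A : IA.c A ⟶ IA.r A) = IA.tril A :=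
  Category.id_comp _

lemma IIA_map_word (w : List A) :
    (IIA L).1.map (IA.tri A ≫ pathCC w) = Sigma.ι (fun _ : Wd A => L.obj (OA.l A)) (ULift.up w) := by
  rw [Functor.map_comp, IIA_map_tri, mapPathCC]
  have h : (fun a => (IIA L).1.map (IA.letter a)) = dM (IIA L) := rfl
  erw [h, IIi, IIA_dpath, List.nil_append]

lemma FFA_map_word (w : List A) :
    (FFA L).1.map (pathCC w ≫ IA.tril A) = Pi.π (fun _ : Wd A => L.obj (OA.r A)) (ULift.up w) := by
  rw [Functor.map_comp, FFA_map_tril, mapPathCC]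
  have h : (fun a => (FFA L).1.map (IA.letter a)) = dM (FFA L) := rfl
  erw [h, FFf, FFA_dpath, List.append_nil]

/-- The unit of the left Kan extension. -/
def ηII : L ⟶ OA.inc A ⋙ (IIA L).1 := eqToHom ((IIA L).2.symm)

lemma etaII_app_l : (ηII L).app (OA.l A) = 𝟙 (L.obj (OA.l A)) := by
  show (eqToHom ((IIA L).2.symm) : L ⟶ OA.inc A ⋙ (IIA L).1).app (OA.l A) = _
  rw [eqToHom_app]
  exact eqToHom_refl _ _

lemma etaII_app_r : (ηII L).app (OA.r A) = 𝟙 (L.obj (OA.r A)) := by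
  show (eqToHom ((IIA L).2.symm) : L ⟶ OA.inc A ⋙ (IIA L).1).app (OA.r A) = _
  rw [eqToHom_app]
  exact eqToHom_refl _ _

/-- The comparison map out of `II` to any left extension. -/
def lanDesc (G : Functor.LeftExtension (OA.inc A) L) : (IIA L).1 ⟶ G.right :=
  natTransOfEdges
    (fun X => match X with
      | WObj.left => G.hom.app (OA.l A)
      | WObj.center => Sigma.desc (fun w =>
          G.hom.app (OA.l A) ≫ G.right.map (IA.tri A ≫ pathCC w.down))
      | WObj.right => G.hom.app (OA.r A))
    (by
      intro X Y e
      match e with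
      | WEdge.tri =>
          show (IIA L).1.map (IA.tri A) ≫ _ = _ ≫ G.right.map (IA.tri A)
          erw [IIA_map_tri, IIi, Sigma.ι_desc]
          show G.hom.app (OA.l A) ≫ G.right.map (IA.tri A ≫ pathCC []) = _
          erw [tri_pathCC_nil]
          rfl
      | WEdge.letter a =>
          show (IIA L).1.map (IA.letter a) ≫ _ = Sigma.desc _ ≫ G.right.map (IA.letter a)
          rw [IIA_map_letter]
          apply Sigma.hom_ext
          intro w
          erw [← Category.assoc, IId, Sigma.ι_desc, Sigma.ι_desc, ← Category.assoc,
            Sigma.ι_desc]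
          show G.hom.app (OA.l A) ≫ G.right.map (IA.tri A ≫ pathCC (w.down ++ [a])) = _
          have hp : (pathCC (w.down ++ [a]) : IA.c A ⟶ IA.c A)
              = pathCC w.down ≫ IA.letter a := by
            rw [pathCC_append, pathCC_singleton]
          rw [hp]
          erw [Functor.map_comp, Functor.map_comp, Functor.map_comp]
          erw [Category.assoc, Category.assoc]
          rfl
      | WEdge.tril =>
          show (IIA L).1.map (IA.tril A) ≫ _ = Sigma.desc _ ≫ G.right.map (IA.tril A)
          rw [IIA_map_tril, IIf]
          apply Sigma.hom_ext
          intro w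
          conv_lhs => erw [← Category.assoc, Sigma.ι_desc]
          conv_rhs => erw [← Category.assoc, Sigma.ι_desc]
          have hnat : L.map (OA.word w.down) ≫ G.hom.app (OA.r A)
              = G.hom.app (OA.l A) ≫ G.right.map (pathLR w.down) :=
            G.hom.naturality (OA.word w.down)
          erw [hnat]
          have hp : (pathLR w.down : IA.l A ⟶ IA.r A)
              = IA.tri A ≫ pathCC w.down ≫ IA.tril A := rfl
          rw [hp]
          erw [Functor.map_comp, Functor.map_comp, Functor.map_comp]
          erw [Category.assoc, Category.assoc]
          rfl)

lemma lanDesc_fac (G : Functor.LeftExtension (OA.inc A) L) :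
    ηII L ≫ CategoryTheory.Functor.whiskerLeft (OA.inc A) (lanDesc L G) = G.hom := by
  apply NatTrans.ext
  funext X
  rcases OA_cases X with rfl | rfl
  · show (ηII L).app (OA.l A) ≫ (lanDesc L G).app (IA.l A) = G.hom.app (OA.l A)
    erw [etaII_app_l, Category.id_comp]
    rfl
  · show (ηII L).app (OA.r A) ≫ (lanDesc L G).app (IA.r A) = G.hom.app (OA.r A)
    erw [etaII_app_r, Category.id_comp]
    rfl

lemma lanDesc_unique (G : Functor.LeftExtension (OA.inc A) L) (γ : (IIA L).1 ⟶ G.right)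
    (hγ : ηII L ≫ CategoryTheory.Functor.whiskerLeft (OA.inc A) γ = G.hom) : γ = lanDesc L G := by
  apply NatTrans.ext
  funext X
  have hl : γ.app (IA.l A) = G.hom.app (OA.l A) := by
    have h := NatTrans.congr_app hγ (OA.l A)
    erw [← h, NatTrans.comp_app, Functor.whiskerLeft_app, etaII_app_l, Category.id_comp]
    rfl
  have hr : γ.app (IA.r A) = G.hom.app (OA.r A) := by
    have h := NatTrans.congr_app hγ (OA.r A)
    erw [← h, NatTrans.comp_app, Functor.whiskerLeft_app, etaII_app_r, Category.id_comp]
    rfl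
  match X with
  | WObj.left => exact hl
  | WObj.right => exact hr
  | WObj.center =>
      show γ.app (IA.c A) = (lanDesc L G).app (IA.c A)
      apply Sigma.hom_ext
      intro w
      have happ : (lanDesc L G).app (IA.c A) = Sigma.desc (fun w =>
          G.hom.app (OA.l A) ≫ G.right.map (IA.tri A ≫ pathCC w.down)) := rfl
      rw [happ, Sigma.ι_desc]
      have hw : Sigma.ι (fun _ : Wd A => L.obj (OA.l A)) w
          = (IIA L).1.map (IA.tri A ≫ pathCC w.down) := (IIA_map_word L w.down).symm
      erw [hw, γ.naturality (IA.tri A ≫ pathCC w.down), hl]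
      rfl

def IIA_isLKE : (IIA L).1.IsLeftKanExtension (ηII L) := by
  constructor
  constructor
  apply IsInitial.ofUniqueHom
    (fun G => StructuredArrow.homMk (lanDesc L G) (by exact lanDesc_fac L G))
  intro G τ
  apply StructuredArrow.hom_ext
  exact lanDesc_unique L G τ.right (by exact StructuredArrow.w τ)

/-- The counit of the right Kan extension. -/
def εFF : OA.inc A ⋙ (FFA L).1 ⟶ L := eqToHom ((FFA L).2)

lemma epsFF_app_l : (εFF L).app (OA.l A) = 𝟙 ((FFA L).1.obj (IA.l A)) := by
  show (eqToHom ((FFA L).2) : OA.inc A ⋙ (FFA L).1 ⟶ L).app (OA.l A) = _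
  erw [eqToHom_app]
  exact eqToHom_refl _ _

lemma epsFF_app_r : (εFF L).app (OA.r A) = 𝟙 ((FFA L).1.obj (IA.r A)) := by
  show (eqToHom ((FFA L).2) : OA.inc A ⋙ (FFA L).1 ⟶ L).app (OA.r A) = _
  erw [eqToHom_app]
  exact eqToHom_refl _ _

/-- The comparison map into `FF` from any right extension. -/
def ranLift (G : Functor.RightExtension (OA.inc A) L) : G.left ⟶ (FFA L).1 :=
  natTransOfEdges
    (fun X => match X with
      | WObj.left => G.hom.app (OA.l A)
      | WObj.center => Pi.lift (fun w =>
          G.left.map (pathCC w.down ≫ IA.tril A) ≫ G.hom.app (OA.r A))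
      | WObj.right => G.hom.app (OA.r A))
    (by
      intro X Y e
      match e with
      | WEdge.tri =>
          show G.left.map (IA.tri A) ≫ Pi.lift _ = _ ≫ (FFA L).1.map (IA.tri A)
          rw [FFA_map_tri]
          apply Limits.Pi.hom_ext
          intro w
          erw [Category.assoc, Pi.lift_π, FFi, Category.assoc, Pi.lift_π, ← Category.assoc,
            ← Functor.map_comp]
          have hnat : G.left.map (pathLR w.down) ≫ G.hom.app (OA.r A)
              = G.hom.app (OA.l A) ≫ L.map (OA.word w.down) :=
            G.hom.naturality (OA.word w.down)
          exact hnat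
      | WEdge.letter a =>
          show G.left.map (IA.letter a) ≫ Pi.lift _ = Pi.lift _ ≫ (FFA L).1.map (IA.letter a)
          rw [FFA_map_letter]
          apply Limits.Pi.hom_ext
          intro w
          erw [Category.assoc, Pi.lift_π, Category.assoc, FFd, Pi.lift_π, Pi.lift_π,
            ← Category.assoc, ← Functor.map_comp]
          have hp : (pathCC (a :: w.down) ≫ IA.tril A : IA.c A ⟶ IA.r A)
              = IA.letter a ≫ pathCC w.down ≫ IA.tril A := by
            have : pathCC (a :: w.down) = (IA.letter a ≫ pathCC w.down : IA.c A ⟶ IA.c A) :=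
              rfl
            rw [this, Category.assoc]
          erw [← hp]
          rfl
      | WEdge.tril =>
          show G.left.map (IA.tril A) ≫ _ = Pi.lift _ ≫ (FFA L).1.map (IA.tril A)
          erw [FFA_map_tril, FFf, Pi.lift_π, pathCC_nil_tril]; rfl)

lemma ranLift_fac (G : Functor.RightExtension (OA.inc A) L) :
    CategoryTheory.Functor.whiskerLeft (OA.inc A) (ranLift L G) ≫ εFF L = G.hom := by
  apply NatTrans.ext
  funext X
  rcases OA_cases X with rfl | rfl
  · show (ranLift L G).app (IA.l A) ≫ (εFF L).app (OA.l A) = G.hom.app (OA.l A)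
    erw [epsFF_app_l, Category.comp_id]
    rfl
  · show (ranLift L G).app (IA.r A) ≫ (εFF L).app (OA.r A) = G.hom.app (OA.r A)
    erw [epsFF_app_r, Category.comp_id]
    rfl

lemma ranLift_unique (G : Functor.RightExtension (OA.inc A) L) (γ : G.left ⟶ (FFA L).1)
    (hγ : CategoryTheory.Functor.whiskerLeft (OA.inc A) γ ≫ εFF L = G.hom) : γ = ranLift L G := by
  apply NatTrans.ext
  funext X
  have hl : γ.app (IA.l A) = G.hom.app (OA.l A) := by
    have h := NatTrans.congr_app hγ (OA.l A)
    rw [← h, NatTrans.comp_app, Functor.whiskerLeft_app, epsFF_app_l]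
    exact (Category.comp_id (γ.app (IA.l A))).symm
  have hr : γ.app (IA.r A) = G.hom.app (OA.r A) := by
    have h := NatTrans.congr_app hγ (OA.r A)
    rw [← h, NatTrans.comp_app, Functor.whiskerLeft_app, epsFF_app_r]
    exact (Category.comp_id (γ.app (IA.r A))).symm
  match X with
  | WObj.left => exact hl
  | WObj.right => exact hr
  | WObj.center =>
      show γ.app (IA.c A) = (ranLift L G).app (IA.c A)
      apply Limits.Pi.hom_ext
      intro w
      have happ : (ranLift L G).app (IA.c A) = (Pi.lift (fun w =>
          G.left.map (pathCC w.down ≫ IA.tril A) ≫ G.hom.app (OA.r A)) :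
            G.left.obj (IA.c A) ⟶ ∏ᶜ (fun _ : Wd A => L.obj (OA.r A))) := rfl
      rw [happ, Pi.lift_π]
      have hw : Pi.π (fun _ : Wd A => L.obj (OA.r A)) w
          = (FFA L).1.map (pathCC w.down ≫ IA.tril A) := (FFA_map_word L w.down).symm
      erw [hw, ← γ.naturality (pathCC w.down ≫ IA.tril A), hr]
      rfl

def FFA_isRKE : (FFA L).1.IsRightKanExtension (εFF L) := by
  constructor
  constructor
  apply IsTerminal.ofUniqueHom
    (fun G => CostructuredArrow.homMk (ranLift L G) (by exact ranLift_fac L G))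
  intro G τ
  apply CostructuredArrow.hom_ext
  exact ranLift_unique L G τ.left (by exact CostructuredArrow.w τ)

end
end MinAux7
/-- If `C` is complete and cocomplete and carries a factorization system `(E, M)`, then for
every language `L : O_A ⥤ C` the category `Auto(L)` has an initial object (a left Kan
extension of `L` along `ι`) and a final object (a right Kan extension of `L` along `ι`),
and the componentwise factorization of the unique morphism from the initial to the final
object yields an automaton `Min` accepting `L` which `(E_Aut, M_Aut)`-divides every
automaton accepting `L`. -/
theorem minimal_automaton_exists {A : Type} {C : Type u} [Category.{v} C]
    [HasLimits C] [HasColimits C] (FS : FactorizationSystem C) (L : OA A ⥤ C) :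
    ∃ (II FF Min : Auto A L),
      Nonempty (IsInitial II) ∧ Nonempty (IsTerminal FF) ∧
      (∃ η : L ⟶ OA.inc A ⋙ II.1, II.1.IsLeftKanExtension η) ∧
      (∃ ε : OA.inc A ⋙ FF.1 ⟶ L, FF.1.IsRightKanExtension ε) ∧
      (∃ (e : II ⟶ Min) (m : Min ⟶ FF),
        (∀ X : IA A, FS.E ((Auto.nat e).app X)) ∧ (∀ X : IA A, FS.M ((Auto.nat m).app X))) ∧
      ∀ M : Auto A L, ∃ (Z : Auto A L) (mm : Z ⟶ M) (ee : Z ⟶ Min),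
        (∀ X : IA A, FS.M ((Auto.nat mm).app X)) ∧
        (∀ X : IA A, FS.E ((Auto.nat ee).app X)) := by
  refine ⟨IIA L, FFA L, MinA L FS, ⟨II_isInitial L⟩, ⟨FF_isTerminal L⟩,
    ⟨ηII L, IIA_isLKE L⟩, ⟨εFF L, FFA_isRKE L⟩,
    ⟨eZ L FS (FFA L), mZ L FS (FFA L), eZ_E L FS (FFA L), mZ_M L FS (FFA L)⟩, ?_⟩
  intro M
  exact ⟨ZA L FS M, mZ L FS M, eeHom L FS M, mZ_M L FS M, eeHom_E L FS M⟩
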